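/- Let q be a prime power and n, k positive integers with k | n. Let U be a k-dimensional F_q-subspace of F_{q^n}. The cyclic orbit code orb(U) = {αU : α ∈ F_{q^n}^*} has minimum subspace distance 2k if and only if U = βF_{q^k} for some β ∈ F_{q^n}^*; in that case |orb(U)| = (q^n - 1)/(q^k - 1). -/

import Mathlib

open Module

/-- The cyclic shift `αU = {αu : u ∈ U}`. -/
noncomputable def cyclicShift {K L : Type*} [Field K] [Field L] [Algebra K L]
    (α : L) (U : Submodule K L) : Submodule K L :=
  U.map (LinearMap.mulLeft K α)

/-- The subspace distance `d(X,Y) = dim X + dim Y - 2 dim(X ∩ Y)`. -/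
noncomputable def subspaceDist {K L : Type*} [Field K] [Field L] [Algebra K L]
    (X Y : Submodule K L) : ℕ :=
  finrank K X + finrank K Y - 2 * finrank K ↥(X ⊓ Y)

/-- The minimum subspace distance of a code. -/
noncomputable def minDist {K L : Type*} [Field K] [Field L] [Algebra K L]
    (C : Set (Submodule K L)) : ℕ :=
  sInf {d : ℕ | ∃ X ∈ C, ∃ Y ∈ C, X ≠ Y ∧ d = subspaceDist X Y}

section Aux
variable {K L : Type*} [Field K] [Field L] [Algebra K L]

lemma mem_cyclicShift {α x : L} {U : Submodule K L} :
    x ∈ cyclicShift α U ↔ ∃ u ∈ U, x = α * u := by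
  simp only [cyclicShift, Submodule.mem_map, LinearMap.mulLeft_apply]
  exact exists_congr fun u => and_congr_right fun _ => eq_comm

lemma cyclicShift_one (U : Submodule K L) : cyclicShift (1 : L) U = U := by
  ext x; simp [mem_cyclicShift]

lemma cyclicShift_mul (a b : L) (U : Submodule K L) :
    cyclicShift a (cyclicShift b U) = cyclicShift (a * b) U := by
  ext x
  simp only [mem_cyclicShift]
  constructor
  · rintro ⟨y, ⟨u, hu, rfl⟩, rfl⟩; exact ⟨u, hu, (mul_assoc a b u).symm⟩
  · rintro ⟨u, hu, rfl⟩; exact ⟨b * u, ⟨u, hu, rfl⟩, mul_assoc a b u⟩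

lemma finrank_cyclicShift {a : L} (ha : a ≠ 0) (U : Submodule K L) :
    finrank K ↥(cyclicShift a U) = finrank K ↥U :=
  (LinearEquiv.finrank_eq (Submodule.equivMapOfInjective _
    (fun x y h => mul_left_cancel₀ ha (by simpa using h)) U)).symm

lemma shift_fix {U : Submodule K L}
    (hP : ∀ a b : L, a ≠ 0 → b ≠ 0 → cyclicShift a U ≠ cyclicShift b U →
      cyclicShift a U ⊓ cyclicShift b U = ⊥)
    {u : L} (hu : u ∈ U) (hu0 : u ≠ 0) {x : L} (hx : x ∈ cyclicShift u⁻¹ U) (hx0 : x ≠ 0) :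
    cyclicShift x U = U := by
  have h1 : x ∈ cyclicShift (x * u⁻¹) U :=
    mem_cyclicShift.mpr ⟨u, hu, by field_simp⟩
  have hxu : x * u⁻¹ ≠ 0 := mul_ne_zero hx0 (inv_ne_zero hu0)
  have heq : cyclicShift (x * u⁻¹) U = cyclicShift u⁻¹ U := by
    by_contra hne
    have hb := hP _ _ hxu (inv_ne_zero hu0) hne
    have : x ∈ (⊥ : Submodule K L) := hb ▸ Submodule.mem_inf.mpr ⟨h1, hx⟩
    exact hx0 ((Submodule.mem_bot K).mp this)
  have h2 := congrArg (cyclicShift u) heq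
  rwa [cyclicShift_mul, cyclicShift_mul,
    show u * (x * u⁻¹) = x by rw [mul_comm, mul_assoc, inv_mul_cancel₀ hu0, mul_one],
    mul_inv_cancel₀ hu0, cyclicShift_one] at h2

lemma ncard_pow_root_le (m : ℕ) (hm : 2 ≤ m) :
    {y : L | y ^ m = y}.ncard ≤ m := by
  classical
  set p : Polynomial L := Polynomial.X ^ m - Polynomial.X with hp
  have hdeg : p.natDegree = m := by
    rw [hp, Polynomial.natDegree_sub_eq_left_of_natDegree_lt] <;>
      simp [Polynomial.natDegree_X_pow, Polynomial.natDegree_X] <;> omega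
  have hp0 : p ≠ 0 := fun h => by simp [h] at hdeg; omega
  have hsub : {y : L | y ^ m = y} ⊆ ↑p.roots.toFinset := by
    intro y hy
    simp only [Set.mem_setOf_eq] at hy
    simp only [Finset.coe_sort_coe, Finset.mem_coe, Multiset.mem_toFinset,
      Polynomial.mem_roots hp0, Polynomial.IsRoot, hp]
    simp [hy, sub_eq_zero]
    exact fun h => hp0 (by rw [hp, h, sub_self])
  calc {y : L | y ^ m = y}.ncard ≤ (↑p.roots.toFinset : Set L).ncard :=
        Set.ncard_le_ncard hsub (Set.toFinite _)
    _ = p.roots.toFinset.card := Set.ncard_coe_finset _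
    _ ≤ Multiset.card p.roots := Multiset.toFinset_card_le _
    _ ≤ p.natDegree := Polynomial.card_roots' p
    _ = m := hdeg

lemma ncard_shift [Fintype K] [Fintype L] {q : ℕ} (hK : Fintype.card K = q)
    {U : Submodule K L} {k : ℕ} (hU : finrank K ↥U = k) {a : L} (ha : a ≠ 0) :
    ((cyclicShift a U : Submodule K L) : Set L).ncard = q ^ k := by
  classical
  have h1 : ((cyclicShift a U : Submodule K L) : Set L).ncard
      = Nat.card ↥(cyclicShift a U) := (Nat.card_coe_set_eq _).symm
  rw [h1, Nat.card_eq_fintype_card, Module.card_eq_pow_finrank (K := K), hK,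
    finrank_cyclicShift ha, hU]

lemma struct {q k : ℕ} (hq2 : 2 ≤ q) (hk : 0 < k)
    [Fintype K] [Fintype L] (hK : Fintype.card K = q)
    {U : Submodule K L} (hU : finrank K ↥U = k)
    (hP : ∀ a b : L, a ≠ 0 → b ≠ 0 → cyclicShift a U ≠ cyclicShift b U →
      cyclicShift a U ⊓ cyclicShift b U = ⊥) :
    ∃ u : L, u ≠ 0 ∧ ((cyclicShift u⁻¹ U : Submodule K L) : Set L) = {y : L | y ^ q ^ k = y} ∧
      (∀ γ : L, γ ≠ 0 → (cyclicShift γ U = U ↔ γ ∈ cyclicShift u⁻¹ U)) := by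
  classical
  have hqk1 : 1 ≤ q ^ k := Nat.one_le_pow _ _ (by omega)
  have hqk2 : 2 ≤ q ^ k := le_trans hq2 (Nat.le_self_pow hk.ne' q)
  have hUbot : U ≠ ⊥ := by
    intro h
    rw [h, finrank_bot] at hU
    omega
  obtain ⟨u, hu, hu0⟩ := (Submodule.ne_bot_iff U).mp hUbot
  have hiu : (u⁻¹ : L) ≠ 0 := inv_ne_zero hu0
  set W : Submodule K L := cyclicShift u⁻¹ U with hWdef
  have h1W : (1 : L) ∈ W := mem_cyclicShift.mpr ⟨u, hu, (inv_mul_cancel₀ hu0).symm⟩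
  have stab : ∀ γ : L, γ ≠ 0 → (cyclicShift γ U = U ↔ γ ∈ W) := by
    intro γ hγ
    constructor
    · intro h
      have hγu : γ * u ∈ U := by
        rw [← h]; exact mem_cyclicShift.mpr ⟨u, hu, rfl⟩
      exact mem_cyclicShift.mpr ⟨γ * u, hγu, by field_simp⟩
    · intro h
      exact shift_fix hP hu hu0 h hγ
  -- multiplicative closure
  have mulW : ∀ x ∈ W, ∀ y ∈ W, x * y ∈ W := by
    intro x hx y hy
    by_cases hx0 : x = 0
    · rw [hx0, zero_mul]; exact W.zero_mem
    · have hfix : cyclicShift x U = U := shift_fix hP hu hu0 hx hx0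
      obtain ⟨v, hv, rfl⟩ := mem_cyclicShift.mp hy
      have hxv : x * v ∈ U := by
        rw [← hfix]; exact mem_cyclicShift.mpr ⟨v, hv, rfl⟩
      exact mem_cyclicShift.mpr ⟨x * v, hxv, by ring⟩
  -- stabilizer subgroup of units
  let H : Subgroup Lˣ :=
  { carrier := {γ : Lˣ | ((γ : L)) ∈ W}
    one_mem' := h1W
    mul_mem' := fun {a b} ha hb => by
      simpa using mulW _ ha _ hb
    inv_mem' := fun {γ} hγ => by
      have h1 : cyclicShift (γ : L) U = U := (stab _ γ.ne_zero).mpr hγ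
      have h2 : cyclicShift ((γ : L))⁻¹ U = U := by
        conv_lhs => rw [← h1]
        rw [cyclicShift_mul, inv_mul_cancel₀ γ.ne_zero, cyclicShift_one]
      have := (stab _ (inv_ne_zero γ.ne_zero)).mp h2
      simpa [Units.val_inv_eq_inv_val] using this }
  have hmemH : ∀ γ : Lˣ, γ ∈ H ↔ ((γ : L)) ∈ W := fun γ => Iff.rfl
  have hcardW : ((W : Submodule K L) : Set L).ncard = q ^ k := ncard_shift hK hU hiu
  have hW0 : (0 : L) ∈ W := W.zero_mem
  -- card H = q^k - 1
  let e : ↥H ≃ ↥(((W : Submodule K L) : Set L) \ {0}) :=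
  { toFun := fun g => ⟨((g : Lˣ) : L), (hmemH _).mp g.2, by simp⟩
    invFun := fun w => ⟨Units.mk0 w.1 (fun h => by
        have := w.2.2; simp [h] at this), (hmemH _).mpr (by simpa using w.2.1)⟩
    left_inv := fun g => by
      apply Subtype.ext; apply Units.ext; rfl
    right_inv := fun w => rfl }
  have hcardH : Nat.card ↥H = q ^ k - 1 := by
    rw [Nat.card_congr e, Nat.card_coe_set_eq,
      Set.ncard_diff_singleton_of_mem hW0, hcardW]
  -- every element of W is a root of X^{q^k} - X
  have hWsub : ((W : Submodule K L) : Set L) ⊆ {y : L | y ^ q ^ k = y} := by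
    intro x hx
    simp only [Set.mem_setOf_eq]
    by_cases hx0 : x = 0
    · rw [hx0]; exact zero_pow (by omega)
    · have hγ : (Units.mk0 x hx0) ∈ H := (hmemH _).mpr (by simpa using hx)
      have hpow : (⟨Units.mk0 x hx0, hγ⟩ : ↥H) ^ (Nat.card ↥H) = 1 := pow_card_eq_one'
      rw [hcardH] at hpow
      have hpow2 : (Units.mk0 x hx0) ^ (q ^ k - 1) = 1 := by
        simpa using congrArg (Subtype.val) hpow
      have hx1 : x ^ (q ^ k - 1) = 1 := by
        have := congrArg (Units.val) hpow2
        simpa using this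
      calc x ^ q ^ k = x ^ (q ^ k - 1 + 1) := by rw [Nat.sub_add_cancel hqk1]
        _ = x ^ (q ^ k - 1) * x := pow_succ x _
        _ = x := by rw [hx1, one_mul]
  have hWR : ((W : Submodule K L) : Set L) = {y : L | y ^ q ^ k = y} :=
    Set.eq_of_subset_of_ncard_le hWsub
      (by rw [hcardW]; exact ncard_pow_root_le _ hqk2) (Set.toFinite _)
  exact ⟨u, hu0, hWR, stab⟩

lemma P_of_setdesc {m : ℕ} {U : Submodule K L} {β : L}
    (hUs : (U : Set L) = {x : L | ∃ y : L, y ^ m = y ∧ x = β * y}) :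
    ∀ a b : L, a ≠ 0 → b ≠ 0 → cyclicShift a U ≠ cyclicShift b U →
      cyclicShift a U ⊓ cyclicShift b U = ⊥ := by
  set R : Set L := {y : L | y ^ m = y} with hR
  have hRmul : ∀ y z : L, y ∈ R → z ∈ R → y * z ∈ R := by
    intro y z hy hz
    simp only [hR, Set.mem_setOf_eq, mul_pow] at *
    rw [hy, hz]
  have hRinv : ∀ y : L, y ∈ R → y⁻¹ ∈ R := by
    intro y hy
    simp only [hR, Set.mem_setOf_eq, inv_pow] at *
    rw [hy]
  have memU : ∀ x : L, x ∈ U ↔ ∃ y ∈ R, x = β * y := by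
    intro x
    have : x ∈ (U : Set L) ↔ x ∈ U := Iff.rfl
    rw [← this, hUs]
    simp only [Set.mem_setOf_eq, hR]
  have memShift : ∀ c z : L, z ∈ cyclicShift c U ↔ ∃ y ∈ R, z = c * β * y := by
    intro c z
    rw [mem_cyclicShift]
    constructor
    · rintro ⟨w, hw, rfl⟩
      obtain ⟨y, hy, rfl⟩ := (memU w).mp hw
      exact ⟨y, hy, by ring⟩
    · rintro ⟨y, hy, rfl⟩
      exact ⟨β * y, (memU _).mpr ⟨y, hy, rfl⟩, by ring⟩
  intro a b ha hb hne
  by_contra hbot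
  obtain ⟨x, hxmem, hx0⟩ := (Submodule.ne_bot_iff _).mp hbot
  have hcoset : ∀ c : L, x ∈ cyclicShift c U →
      ∀ z : L, z ∈ cyclicShift c U ↔ ∃ y ∈ R, z = x * y := by
    intro c hxc z
    obtain ⟨y₁, hy₁, hxe⟩ := (memShift c x).mp hxc
    have hy10 : y₁ ≠ 0 := by
      intro h
      rw [h, mul_zero] at hxe
      exact hx0 hxe
    rw [memShift]
    constructor
    · rintro ⟨y, hy, rfl⟩
      refine ⟨y₁⁻¹ * y, hRmul _ _ (hRinv _ hy₁) hy, ?_⟩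
      rw [hxe]
      field_simp
    · rintro ⟨y, hy, rfl⟩
      exact ⟨y₁ * y, hRmul _ _ hy₁ hy, by rw [hxe]; ring⟩
  have hxa : x ∈ cyclicShift a U := (Submodule.mem_inf.mp hxmem).1
  have hxb : x ∈ cyclicShift b U := (Submodule.mem_inf.mp hxmem).2
  apply hne
  ext z
  rw [hcoset a hxa z, hcoset b hxb z]

lemma minDist_orbit {k : ℕ} {U : Submodule K L} (hU : finrank K ↥U = k)
    (hP : ∀ a b : L, a ≠ 0 → b ≠ 0 → cyclicShift a U ≠ cyclicShift b U →
      cyclicShift a U ⊓ cyclicShift b U = ⊥)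
    (hex : ∃ a : L, a ≠ 0 ∧ cyclicShift a U ≠ U) :
    minDist {V : Submodule K L | ∃ α : L, α ≠ 0 ∧ V = cyclicShift α U} = 2 * k := by
  set C := {V : Submodule K L | ∃ α : L, α ≠ 0 ∧ V = cyclicShift α U} with hC
  set S := {d : ℕ | ∃ X ∈ C, ∃ Y ∈ C, X ≠ Y ∧ d = subspaceDist X Y} with hS
  have hdist : ∀ a b : L, a ≠ 0 → b ≠ 0 → cyclicShift a U ≠ cyclicShift b U →
      subspaceDist (cyclicShift a U) (cyclicShift b U) = 2 * k := by
    intro a b ha hb hne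
    have hbot := hP a b ha hb hne
    unfold subspaceDist
    rw [hbot, finrank_cyclicShift ha U, finrank_cyclicShift hb U, hU, finrank_bot]
    omega
  obtain ⟨a, ha, hane⟩ := hex
  have hmem : 2 * k ∈ S := by
    refine ⟨U, ⟨1, one_ne_zero, (cyclicShift_one U).symm⟩, cyclicShift a U, ⟨a, ha, rfl⟩,
      (Ne.symm hane), ?_⟩
    have h1a : cyclicShift (1 : L) U ≠ cyclicShift a U := by
      rw [cyclicShift_one]; exact Ne.symm hane
    have := hdist 1 a one_ne_zero ha h1a
    rw [cyclicShift_one] at this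
    exact this.symm
  have hall : ∀ d ∈ S, d = 2 * k := by
    rintro d ⟨X, ⟨a', ha', rfl⟩, Y, ⟨b', hb', rfl⟩, hne, rfl⟩
    exact hdist a' b' ha' hb' hne
  have hSne : S.Nonempty := ⟨2 * k, hmem⟩
  have := Nat.sInf_mem hSne
  exact hall _ this

lemma P_of_minDist [Fintype L] {k : ℕ} {U : Submodule K L} (hk : 0 < k)
    (hU : finrank K ↥U = k)
    (h : minDist {V : Submodule K L | ∃ α : L, α ≠ 0 ∧ V = cyclicShift α U} = 2 * k) :
    ∀ a b : L, a ≠ 0 → b ≠ 0 → cyclicShift a U ≠ cyclicShift b U →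
      cyclicShift a U ⊓ cyclicShift b U = ⊥ := by
  intro a b ha hb hne
  by_contra hbot
  have hm : 0 < finrank K ↥(cyclicShift a U ⊓ cyclicShift b U) := by
    rcases Nat.eq_zero_or_pos (finrank K ↥(cyclicShift a U ⊓ cyclicShift b U)) with h0 | h0
    · exact absurd (Submodule.finrank_eq_zero.mp h0) hbot
    · exact h0
  have hle : finrank K ↥(cyclicShift a U ⊓ cyclicShift b U) ≤ k := by
    have := Submodule.finrank_mono (inf_le_left :
      cyclicShift a U ⊓ cyclicShift b U ≤ cyclicShift a U)
    rwa [finrank_cyclicShift ha U, hU] at this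
  have hd : subspaceDist (cyclicShift a U) (cyclicShift b U) ∈
      {d : ℕ | ∃ X ∈ {V : Submodule K L | ∃ α : L, α ≠ 0 ∧ V = cyclicShift α U},
        ∃ Y ∈ {V : Submodule K L | ∃ α : L, α ≠ 0 ∧ V = cyclicShift α U},
          X ≠ Y ∧ d = subspaceDist X Y} :=
    ⟨_, ⟨a, ha, rfl⟩, _, ⟨b, hb, rfl⟩, hne, rfl⟩
  have h2 := Nat.sInf_le hd
  rw [show sInf _ = minDist {V : Submodule K L | ∃ α : L, α ≠ 0 ∧ V = cyclicShift α U}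
      from rfl, h] at h2
  unfold subspaceDist at h2
  rw [finrank_cyclicShift ha U, finrank_cyclicShift hb U, hU] at h2
  omega

lemma card_orbit [Fintype K] [Fintype L] {q n k : ℕ}
    (hK : Fintype.card K = q) (hL : Fintype.card L = q ^ n) (hq2 : 2 ≤ q) (hk : 0 < k)
    {U : Submodule K L} (hU : finrank K ↥U = k)
    {u : L} (hu0 : u ≠ 0)
    (stab : ∀ γ : L, γ ≠ 0 → (cyclicShift γ U = U ↔ γ ∈ cyclicShift u⁻¹ U)) :
    Set.ncard {V : Submodule K L | ∃ α : L, α ≠ 0 ∧ V = cyclicShift α U} =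
      (q ^ n - 1) / (q ^ k - 1) := by
  classical
  have hqk1 : 1 ≤ q ^ k := Nat.one_le_pow _ _ (by omega)
  have hqk2 : 2 ≤ q ^ k := le_trans hq2 (Nat.le_self_pow hk.ne' q)
  set W : Submodule K L := cyclicShift u⁻¹ U with hWdef
  set C := {V : Submodule K L | ∃ α : L, α ≠ 0 ∧ V = cyclicShift α U} with hC
  let H : Subgroup Lˣ :=
  { carrier := {γ : Lˣ | cyclicShift ((γ : L)) U = U}
    one_mem' := by simpa using cyclicShift_one U
    mul_mem' := fun {a b} ha hb => by
      have : cyclicShift ((↑(a * b) : L)) U = cyclicShift (↑a : L) (cyclicShift (↑b : L) U) := by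
        rw [cyclicShift_mul, Units.val_mul]
      simp only [Set.mem_setOf_eq] at *
      rw [this, hb, ha]
    inv_mem' := fun {γ} hγ => by
      simp only [Set.mem_setOf_eq] at *
      conv_lhs => rw [← hγ]
      rw [Units.val_inv_eq_inv_val, cyclicShift_mul, inv_mul_cancel₀ γ.ne_zero,
        cyclicShift_one] }
  have hmemH : ∀ γ : Lˣ, γ ∈ H ↔ cyclicShift ((γ : L)) U = U := fun γ => Iff.rfl
  have hcardW : ((W : Submodule K L) : Set L).ncard = q ^ k :=
    ncard_shift hK hU (inv_ne_zero hu0)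
  have hW0 : (0 : L) ∈ W := W.zero_mem
  let e : ↥H ≃ ↥(((W : Submodule K L) : Set L) \ {0}) :=
  { toFun := fun g => ⟨((g : Lˣ) : L),
      (stab _ (Units.ne_zero _)).mp ((hmemH _).mp g.2), by simp⟩
    invFun := fun w => ⟨Units.mk0 w.1 (fun h => by
        have := w.2.2; simp [h] at this),
      (hmemH _).mpr ((stab _ (by
        have := w.2.2; simpa using this)).mpr (by simpa using w.2.1))⟩
    left_inv := fun g => by apply Subtype.ext; apply Units.ext; rfl
    right_inv := fun w => rfl }
  have hcardH : Nat.card ↥H = q ^ k - 1 := by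
    rw [Nat.card_congr e, Nat.card_coe_set_eq,
      Set.ncard_diff_singleton_of_mem hW0, hcardW]
  -- the orbit map from the quotient
  let f : (Lˣ ⧸ H) → Submodule K L :=
    fun x => Quotient.liftOn' x (fun γ : Lˣ => cyclicShift ((γ : L)) U)
      (by
        intro a b hab
        have hab' : a⁻¹ * b ∈ H := QuotientGroup.leftRel_apply.mp hab
        have h1 : cyclicShift ((↑(a⁻¹ * b) : L)) U = U := (hmemH _).mp hab'
        have : cyclicShift ((b : L)) U
            = cyclicShift ((a : L)) (cyclicShift ((↑(a⁻¹ * b) : L)) U) := by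
          rw [cyclicShift_mul]
          congr 1
          rw [Units.val_mul, Units.val_inv_eq_inv_val, ← mul_assoc,
            mul_inv_cancel₀ (Units.ne_zero a), one_mul]
        rw [this, h1])
  have hf : ∀ γ : Lˣ, f (Quotient.mk'' γ) = cyclicShift ((γ : L)) U := fun γ => rfl
  have hinj : Function.Injective f := by
    intro x y
    refine Quotient.inductionOn₂' x y ?_
    intro a b hab
    rw [hf, hf] at hab
    apply Quotient.sound'
    rw [QuotientGroup.leftRel_apply]
    rw [hmemH]
    have : cyclicShift ((↑(a⁻¹ * b) : L)) U = cyclicShift ((a : L))⁻¹ (cyclicShift ((b : L)) U) := by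
      rw [cyclicShift_mul, Units.val_mul, Units.val_inv_eq_inv_val]
    rw [this, ← hab, cyclicShift_mul, inv_mul_cancel₀ (Units.ne_zero a), cyclicShift_one]
  have hrange : Set.range f = C := by
    ext V
    constructor
    · rintro ⟨x, rfl⟩
      refine Quotient.inductionOn' x ?_
      intro γ
      exact ⟨(γ : L), Units.ne_zero γ, (hf γ).symm⟩
    · rintro ⟨α, hα, rfl⟩
      exact ⟨Quotient.mk'' (Units.mk0 α hα), hf _⟩
  have h1 : Set.ncard C = Nat.card (Lˣ ⧸ H) := by
    rw [← hrange, ← Nat.card_coe_set_eq]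
    exact Nat.card_congr (Equiv.ofInjective f hinj).symm
  have h2 : Nat.card (Lˣ ⧸ H) = H.index := (Subgroup.index_eq_card H).symm
  have h3 : H.index * (q ^ k - 1) = q ^ n - 1 := by
    have := Subgroup.index_mul_card H
    rw [hcardH] at this
    rw [this, Nat.card_eq_fintype_card, Fintype.card_units, hL]
  rw [h1, h2]
  exact (Nat.div_eq_of_eq_mul_left (by omega) h3.symm).symm

end Aux

/-- For `k ∣ n`, `k < n`, and a `k`-dimensional `F_q`-subspace `U` of
`F_{q^n}`, the orbit code `orb(U) = {αU : α ∈ F_{q^n}^*}` has minimum subspace distance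
`2k` if and only if `U = βF_{q^k}` for some `β ∈ F_{q^n}^*` (where
`F_{q^k} = {y : y^{q^k} = y}` is the subfield of order `q^k`); in that case
`|orb(U)| = (q^n - 1)/(q^k - 1)`. -/
theorem stmt_19 (q n k : ℕ) (hq : IsPrimePow q) (hk : 0 < k) (hkn : k ∣ n) (hklt : k < n)
    (K L : Type*) [Field K] [Fintype K] [Field L] [Fintype L] [Algebra K L]
    (hK : Fintype.card K = q) (hL : Fintype.card L = q ^ n)
    (U : Submodule K L) (hU : finrank K U = k) :
    (minDist {V : Submodule K L | ∃ α : L, α ≠ 0 ∧ V = cyclicShift α U} = 2 * k ↔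
      ∃ β : L, β ≠ 0 ∧ (U : Set L) = {x : L | ∃ y : L, y ^ (q ^ k) = y ∧ x = β * y}) ∧
    (minDist {V : Submodule K L | ∃ α : L, α ≠ 0 ∧ V = cyclicShift α U} = 2 * k →
      Set.ncard {V : Submodule K L | ∃ α : L, α ≠ 0 ∧ V = cyclicShift α U} =
        (q ^ n - 1) / (q ^ k - 1)) := by
  have hq2 : 2 ≤ q := hq.two_le
  have hqk1 : 1 ≤ q ^ k := Nat.one_le_pow _ _ (by omega)
  have hqk2 : 2 ≤ q ^ k := le_trans hq2 (Nat.le_self_pow hk.ne' q)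
  constructor
  · constructor
    · intro h
      have hP := P_of_minDist hk hU h
      obtain ⟨u, hu0, hWR, stab⟩ := struct hq2 hk hK hU hP
      refine ⟨u, hu0, ?_⟩
      have hUW : U = cyclicShift u (cyclicShift u⁻¹ U) := by
        rw [cyclicShift_mul, mul_inv_cancel₀ hu0, cyclicShift_one]
      ext x
      simp only [Set.mem_setOf_eq, SetLike.mem_coe]
      constructor
      · intro hx
        rw [hUW] at hx
        obtain ⟨w, hw, rfl⟩ := mem_cyclicShift.mp hx
        have hmem : w ∈ ((cyclicShift u⁻¹ U : Submodule K L) : Set L) := hw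
        rw [hWR] at hmem
        exact ⟨w, hmem, rfl⟩
      · rintro ⟨y, hy, rfl⟩
        have hmem : y ∈ ((cyclicShift u⁻¹ U : Submodule K L) : Set L) := by
          rw [hWR]; exact hy
        rw [hUW]
        exact mem_cyclicShift.mpr ⟨y, hmem, rfl⟩
    · rintro ⟨β, hβ, hUs⟩
      have hP := P_of_setdesc (m := q ^ k) hUs
      apply minDist_orbit hU hP
      have hζ : ∃ γ : L, γ ∉ {y : L | y ^ q ^ k = y} := by
        by_contra hc
        push_neg at hc
        have h1 : (Set.univ : Set L).ncard ≤ q ^ k := by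
          have hsub : (Set.univ : Set L) ⊆ {y : L | y ^ q ^ k = y} := fun y _ => hc y
          exact le_trans (Set.ncard_le_ncard hsub (Set.toFinite _)) (ncard_pow_root_le _ hqk2)
        rw [Set.ncard_univ, Nat.card_eq_fintype_card, hL] at h1
        have h2 : q ^ k < q ^ n := Nat.pow_lt_pow_right (by omega : 1 < q) hklt
        omega
      obtain ⟨γ, hγR⟩ := hζ
      have hγ0 : γ ≠ 0 := fun h => hγR (by rw [h]; exact zero_pow (by omega))
      refine ⟨γ, hγ0, ?_⟩
      intro heq
      have hβU : β ∈ U := by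
        have : β ∈ (U : Set L) := by rw [hUs]; exact ⟨1, one_pow _, (mul_one β).symm⟩
        exact this
      have hγβ : γ * β ∈ (U : Set L) := by
        have : γ * β ∈ U := by rw [← heq]; exact mem_cyclicShift.mpr ⟨β, hβU, rfl⟩
        exact this
      rw [hUs] at hγβ
      obtain ⟨y, hy, hyy⟩ := hγβ
      have hgy : γ = y := mul_left_cancel₀ hβ (by rw [mul_comm β γ, hyy])
      exact hγR (by rw [hgy]; exact hy)
  · intro h
    have hP := P_of_minDist hk hU h
    obtain ⟨u, hu0, _, stab⟩ := struct hq2 hk hK hU hP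
    exact card_orbit hK hL hq2 hk hU hu0 stab
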